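/- There is a constant C > 0 such that for all positive integers x, |F(x) - P·x| ≤ C·x^{1/2}, i.e. F(x) = P·x + O(x^{1/2}). -/

import Mathlib

open Finset Real

/-- `F x` is the cardinality of the set `{n : 1 ≤ n ≤ x, ⌊x/n⌋ prime}`. -/
def F (x : ℕ) : ℕ := ((Finset.Icc 1 x).filter (fun n => Nat.Prime (x / n))).card

/-- `P = Σ_{p prime} 1/(p(p+1))`. -/
noncomputable def P : ℝ := ∑' p : Nat.Primes, 1 / ((p : ℝ) * ((p : ℝ) + 1))

private noncomputable def gg (n : ℕ) : ℝ :=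
  Set.indicator {p : ℕ | Nat.Prime p} (fun m : ℕ => 1 / ((m : ℝ) * ((m : ℝ) + 1))) n

private lemma gg_nonneg (n : ℕ) : 0 ≤ gg n := by
  unfold gg
  apply Set.indicator_nonneg
  intro m _
  positivity

private lemma gg_le (n : ℕ) : gg n ≤ 1 / ((n : ℝ) * ((n : ℝ) + 1)) :=
  Set.indicator_le_self' (fun m _ => by positivity) n

private lemma summable_gg : Summable gg := by
  have key : ∀ n : ℕ, 1 / ((n:ℝ) * ((n:ℝ) + 1)) ≤ 1 / (n:ℝ)^2 := by
    intro n
    rcases Nat.eq_zero_or_pos n with h | h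
    · subst h; norm_num
    · have h1 : (0:ℝ) < n := by exact_mod_cast h
      apply one_div_le_one_div_of_le (by positivity)
      nlinarith
  exact Summable.of_nonneg_of_le gg_nonneg (fun n => (gg_le n).trans (key n))
    (Real.summable_one_div_nat_pow.mpr (by norm_num))

private lemma P_eq : P = ∑' n : ℕ, gg n := by
  have h := tsum_subtype {p : ℕ | Nat.Prime p} (fun m : ℕ => 1 / ((m : ℝ) * ((m : ℝ) + 1)))
  unfold P gg
  exact h

private lemma partial_tel (N : ℕ) (hN : 0 < N) (n : ℕ) :
    ∑ i ∈ range n, 1 / (((i:ℝ) + N) * ((i:ℝ) + N + 1)) = 1 / N - 1 / (N + n) := by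
  induction n with
  | zero => simp
  | succ n ih =>
    rw [sum_range_succ, ih]
    have h1 : (0:ℝ) < N := by exact_mod_cast hN
    have h2 : (0:ℝ) < (N:ℝ) + n := by positivity
    push_cast
    field_simp
    ring

private lemma tail_le (N : ℕ) (hN : 0 < N) : ∑' n : ℕ, gg (n + N) ≤ 1 / (N : ℝ) := by
  have hs : Summable (fun n : ℕ => gg (n + N)) := (summable_nat_add_iff N).mpr summable_gg
  apply hs.tsum_le_of_sum_range_le
  intro n
  have h1 : (0:ℝ) < N := by exact_mod_cast hN
  have h2 : (0:ℝ) < (N:ℝ) + n := by positivity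
  calc ∑ i ∈ range n, gg (i + N)
      ≤ ∑ i ∈ range n, 1 / (((i:ℝ) + N) * ((i:ℝ) + N + 1)) := by
        apply sum_le_sum
        intro i _
        have h := gg_le (i + N)
        push_cast at h
        exact h
    _ = 1 / N - 1 / (N + n) := partial_tel N hN n
    _ ≤ 1 / N := by
        have : 0 ≤ 1 / ((N:ℝ) + n) := by positivity
        linarith

private lemma div_lt_bound {x n : ℕ} (hn : 0 < n) : x < n * (x / n + 1) := by
  have h1 := Nat.div_add_mod x n
  have h2 := Nat.mod_lt x hn
  calc x = n * (x / n) + x % n := h1.symm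
    _ < n * (x / n) + n := Nat.add_lt_add_left h2 _
    _ = n * (x / n + 1) := by ring

private lemma div_eq_iff' {x n p : ℕ} (hn : 0 < n) (hp : 0 < p) :
    x / n = p ↔ x / (p+1) < n ∧ n ≤ x / p := by
  constructor
  · rintro rfl
    refine ⟨?_, ?_⟩
    · rw [Nat.div_lt_iff_lt_mul (Nat.succ_pos _)]
      exact div_lt_bound hn
    · rw [Nat.le_div_iff_mul_le hp]
      rw [mul_comm]
      exact Nat.div_mul_le_self x n
  · rintro ⟨h1, h2⟩
    have hub : x < n * (p+1) := (Nat.div_lt_iff_lt_mul (Nat.succ_pos _)).mp h1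
    have hlb : n * p ≤ x := (Nat.le_div_iff_mul_le hp).mp h2
    have c1 : p ≤ x / n := (Nat.le_div_iff_mul_le hn).mpr (by rw [mul_comm]; exact hlb)
    have c2 : x / n < p + 1 := (Nat.div_lt_iff_lt_mul hn).mpr (by rw [mul_comm] at hub; exact hub)
    omega

theorem F_asymptotic :
    ∃ C > (0:ℝ), ∀ x : ℕ, 0 < x →
      |(F x : ℝ) - P * x| ≤ C * (x : ℝ) ^ ((1:ℝ)/2) := by
  refine ⟨5, by norm_num, ?_⟩
  intro x hx
  set s := Nat.sqrt x with hs_def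
  have hs1 : 1 ≤ s := Nat.sqrt_pos.mpr hx
  set S := (Icc 1 x).filter (fun n => Nat.Prime (x / n)) with hS
  set Q := (range (s+1)).filter Nat.Prime with hQ
  -- splitting the count
  have hcard : (S.filter (fun n => s < x / n)).card
      + (S.filter (fun n => ¬ s < x / n)).card = S.card :=
    card_filter_add_card_filter_not _
  -- bound on large part
  have hE : (S.filter (fun n => s < x / n)).card ≤ s := by
    have hsub : S.filter (fun n => s < x / n) ⊆ Icc 1 s := by
      intro n hn
      simp only [hS, mem_filter, mem_Icc] at hn
      obtain ⟨⟨⟨h1, h2⟩, hp⟩, hlt⟩ := hn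
      refine mem_Icc.mpr ⟨h1, ?_⟩
      by_contra hns
      push_neg at hns
      have h3 : x / n ≤ x / (s+1) := Nat.div_le_div_left hns (Nat.succ_pos s)
      have h4 : x / (s+1) < s + 1 := Nat.div_lt_of_lt_mul (Nat.lt_succ_sqrt x)
      omega
    calc (S.filter (fun n => s < x / n)).card ≤ (Icc 1 s).card := card_le_card hsub
      _ = s := by rw [Nat.card_Icc]; omega
  -- fiberwise decomposition of small part
  have hfib : (S.filter (fun n => ¬ s < x / n)).card = ∑ p ∈ Q, (x / p - x / (p+1)) := by
    rw [card_eq_sum_card_fiberwise (f := fun n => x / n) (s := S.filter (fun n => ¬ s < x / n)) (t := Q)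
      (fun n hn => by
        simp only [hS, coe_filter, Set.mem_setOf_eq, mem_filter, mem_Icc, not_lt] at hn
        exact mem_coe.mpr <| mem_filter.mpr ⟨mem_range.mpr (Nat.lt_succ_of_le hn.2), hn.1.2⟩)]
    apply sum_congr rfl
    intro p hp
    simp only [hQ, mem_filter, mem_range] at hp
    obtain ⟨hps, hpp⟩ := hp
    have hfe : ((S.filter (fun n => ¬ s < x / n)).filter (fun n => x / n = p))
        = Ioc (x/(p+1)) (x/p) := by
      ext n
      simp only [hS, mem_filter, mem_Icc, mem_Ioc, not_lt]
      constructor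
      · rintro ⟨⟨⟨⟨h1, h2⟩, hpr⟩, hle⟩, heq⟩
        exact (div_eq_iff' h1 hpp.pos).mp heq
      · rintro ⟨h1, h2⟩
        have hn : 0 < n := lt_of_le_of_lt (Nat.zero_le _) h1
        have heq : x / n = p := (div_eq_iff' hn hpp.pos).mpr ⟨h1, h2⟩
        refine ⟨⟨⟨⟨hn, ?_⟩, ?_⟩, ?_⟩, heq⟩
        · exact le_trans h2 (Nat.div_le_self x p)
        · rw [heq]; exact hpp
        · rw [heq]; omega
    rw [hfe, Nat.card_Ioc]
  -- F as a sum
  have hFnat : F x = (S.filter (fun n => s < x / n)).card + ∑ p ∈ Q, (x / p - x / (p+1)) := by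
    rw [F, ← hS, ← hcard, hfib]
  -- P * x split
  set T : ℝ := (x:ℝ) * ∑' n : ℕ, gg (n + (s+1)) with hT_def
  have hPsplit : P * x = (∑ p ∈ Q, (x:ℝ) * (1 / ((p:ℝ) * ((p:ℝ)+1)))) + T := by
    rw [P_eq, mul_comm, ← Summable.sum_add_tsum_nat_add (s+1) summable_gg, mul_add, hT_def]
    congr 1
    rw [mul_sum, hQ, sum_filter]
    apply sum_congr rfl
    intro n _
    simp [gg, Set.indicator_apply, Set.mem_setOf_eq, mul_ite]
  -- bounds on T
  have hT0 : 0 ≤ T := mul_nonneg (Nat.cast_nonneg x) (tsum_nonneg fun n => gg_nonneg _)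
  have hT1 : T ≤ (s:ℝ) + 1 := by
    have h1 := tail_le (s+1) (Nat.succ_pos s)
    push_cast at h1
    have h2 : (x:ℝ) < ((s:ℝ)+1) * ((s:ℝ)+1) := by exact_mod_cast Nat.lt_succ_sqrt x
    have h3 : (0:ℝ) < (s:ℝ) + 1 := by positivity
    calc T ≤ (x:ℝ) * (1 / ((s:ℝ)+1)) :=
          mul_le_mul_of_nonneg_left h1 (Nat.cast_nonneg x)
      _ ≤ (((s:ℝ)+1) * ((s:ℝ)+1)) * (1 / ((s:ℝ)+1)) := by
          apply mul_le_mul_of_nonneg_right (le_of_lt h2) (by positivity)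
      _ = (s:ℝ) + 1 := by field_simp
  -- per-prime error bound
  have hterm : ∀ p ∈ Q,
      |((x / p - x / (p+1) : ℕ) : ℝ) - (x:ℝ) * (1 / ((p:ℝ) * ((p:ℝ)+1)))| ≤ 1 := by
    intro p hp
    have hpp : p.Prime := (mem_filter.mp hp).2
    have hp0 : (0:ℝ) < p := by exact_mod_cast hpp.pos
    have hp1 : (0:ℝ) < (p:ℝ) + 1 := by positivity
    have hle : x / (p+1) ≤ x / p := Nat.div_le_div_left (Nat.le_succ p) hpp.pos
    rw [Nat.cast_sub hle]
    have ha1 : ((x / p : ℕ) : ℝ) ≤ (x:ℝ) / p := Nat.cast_div_le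
    have ha2 : (x:ℝ) / p < ((x / p : ℕ) : ℝ) + 1 := by
      rw [div_lt_iff₀ hp0]
      have := div_lt_bound (x := x) hpp.pos
      have hcast : (x:ℝ) < (p:ℝ) * (((x / p : ℕ):ℝ) + 1) := by exact_mod_cast this
      linarith [hcast]
    have hb1 : ((x / (p+1) : ℕ) : ℝ) ≤ (x:ℝ) / ((p:ℝ)+1) := by
      have := Nat.cast_div_le (α := ℝ) (m := x) (n := p+1)
      push_cast at this
      exact this
    have hb2 : (x:ℝ) / ((p:ℝ)+1) < ((x / (p+1) : ℕ) : ℝ) + 1 := by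
      rw [div_lt_iff₀ hp1]
      have := div_lt_bound (x := x) (n := p+1) (Nat.succ_pos p)
      have hcast : (x:ℝ) < ((p:ℝ)+1) * (((x / (p+1) : ℕ):ℝ) + 1) := by exact_mod_cast this
      linarith [hcast]
    have hr : (x:ℝ) * (1 / ((p:ℝ) * ((p:ℝ)+1))) = (x:ℝ)/(p:ℝ) - (x:ℝ)/((p:ℝ)+1) := by
      field_simp
      ring
    rw [hr, abs_le]
    constructor <;> linarith
  -- sum of errors
  have hQcard : (Q.card : ℝ) ≤ (s:ℝ) + 1 := by
    have : Q.card ≤ s + 1 := by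
      calc Q.card ≤ (range (s+1)).card := card_filter_le _ _
        _ = s + 1 := card_range _
    exact_mod_cast this
  have hsum_bound :
      |∑ p ∈ Q, (((x / p - x / (p+1) : ℕ) : ℝ) - (x:ℝ) * (1 / ((p:ℝ) * ((p:ℝ)+1))))|
        ≤ (s:ℝ) + 1 := by
    calc |∑ p ∈ Q, (((x / p - x / (p+1) : ℕ) : ℝ) - (x:ℝ) * (1 / ((p:ℝ) * ((p:ℝ)+1))))|
        ≤ ∑ p ∈ Q, |(((x / p - x / (p+1) : ℕ) : ℝ) - (x:ℝ) * (1 / ((p:ℝ) * ((p:ℝ)+1))))| :=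
          abs_sum_le_sum_abs _ _
      _ ≤ ∑ _p ∈ Q, (1:ℝ) := sum_le_sum hterm
      _ = (Q.card : ℝ) := by rw [sum_const, nsmul_eq_mul, mul_one]
      _ ≤ (s:ℝ) + 1 := hQcard
  -- cast F
  have hFR : (F x : ℝ) = ((S.filter (fun n => s < x / n)).card : ℝ)
      + ∑ p ∈ Q, ((x / p - x / (p+1) : ℕ) : ℝ) := by
    rw [hFnat]
    push_cast [Nat.cast_sum]
    ring_nf
  -- key identity
  have hkey : (F x : ℝ) - P * x
      = (((S.filter (fun n => s < x / n)).card : ℝ) - T)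
        + ∑ p ∈ Q, (((x / p - x / (p+1) : ℕ) : ℝ) - (x:ℝ) * (1 / ((p:ℝ) * ((p:ℝ)+1)))) := by
    rw [hFR, hPsplit, sum_sub_distrib]
    ring
  -- |E - T| ≤ s + 1
  have hEr : ((S.filter (fun n => s < x / n)).card : ℝ) ≤ (s:ℝ) := by exact_mod_cast hE
  have hE0 : (0:ℝ) ≤ ((S.filter (fun n => s < x / n)).card : ℝ) := Nat.cast_nonneg _
  have hET : |((S.filter (fun n => s < x / n)).card : ℝ) - T| ≤ (s:ℝ) + 1 :=
    abs_le.mpr ⟨by linarith, by linarith⟩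
  -- sqrt bounds
  have hsx : (s:ℝ) ≤ Real.sqrt x := by
    rw [show (s:ℝ) = Real.sqrt ((s:ℝ)^2) from (Real.sqrt_sq (Nat.cast_nonneg s)).symm]
    apply Real.sqrt_le_sqrt
    have := Nat.sqrt_le' x
    exact_mod_cast this
  have hsq1 : (1:ℝ) ≤ Real.sqrt x := by
    rw [show (1:ℝ) = Real.sqrt 1 from Real.sqrt_one.symm]
    apply Real.sqrt_le_sqrt
    exact_mod_cast hx
  -- conclusion
  rw [← Real.sqrt_eq_rpow]
  calc |(F x : ℝ) - P * x|
      ≤ |((S.filter (fun n => s < x / n)).card : ℝ) - T|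
        + |∑ p ∈ Q, (((x / p - x / (p+1) : ℕ) : ℝ) - (x:ℝ) * (1 / ((p:ℝ) * ((p:ℝ)+1))))| := by
        rw [hkey]; exact abs_add_le _ _
    _ ≤ ((s:ℝ) + 1) + ((s:ℝ) + 1) := add_le_add hET hsum_bound
    _ ≤ 5 * Real.sqrt x := by linarith
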